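/- Let γ, γ', C, η > 0 and ρ ∈ (0, γ) satisfy η ≤ (1/4)·min{1 − 2^{−γ}, 1 − 2^{−γ'}, 1 − 2^{ρ−γ}}. Then for every bounded sequence {x_k} of nonnegative reals satisfying, for all k ≥ 0, x_k ≤ C·2^{−γk} + η·Σ_{l=0}^{k−1} 2^{−γ(k−l)} x_l + η·Σ_{l=k}^{∞} 2^{−γ'|k−l|} x_l, it follows that x_k ≤ (4C + ‖x‖_{ℓ^∞})·2^{−ρk} for all k ≥ 0. -/

import Mathlib

open scoped Real
open Filter Topology

private lemma rpow_mul_nat' (a : ℝ) (n : ℕ) : (2:ℝ) ^ (a * (n:ℝ)) = ((2:ℝ) ^ a) ^ n := by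
  rw [← Real.rpow_natCast ((2:ℝ) ^ a) n, ← Real.rpow_mul (by norm_num)]

private lemma geom_refl_sum {t : ℝ} (h0 : 0 ≤ t) (h1 : t < 1) (k : ℕ) :
    ∑ l ∈ Finset.range k, t ^ (k - l) ≤ (1 - t)⁻¹ := by
  have h2 : ∑ l ∈ Finset.range k, t ^ (k - l) ≤ ∑ l ∈ Finset.range k, t ^ l := by
    rw [← Finset.sum_range_reflect (fun l => t ^ l) k]
    refine Finset.sum_le_sum fun j hj => ?_
    have hj' : j < k := Finset.mem_range.mp hj
    exact pow_le_pow_of_le_one h0 h1.le (by omega)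
  refine h2.trans ?_
  calc ∑ l ∈ Finset.range k, t ^ l ≤ ∑' l : ℕ, t ^ l :=
        Summable.sum_le_tsum _ (fun i _ => pow_nonneg h0 i) (summable_geometric_of_lt_one h0 h1)
    _ = (1 - t)⁻¹ := tsum_geometric_of_lt_one h0 h1

private lemma eta_inv_bound {η a : ℝ} (ha : 0 < 1 - a) (h : η ≤ (1 - a) / 4) :
    η * (1 - a)⁻¹ ≤ 1 / 4 := by
  calc η * (1 - a)⁻¹ ≤ ((1 - a) / 4) * (1 - a)⁻¹ :=
        mul_le_mul_of_nonneg_right h (inv_nonneg.mpr ha.le)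
    _ = (1 / 4) * ((1 - a) * (1 - a)⁻¹) := by ring
    _ = 1 / 4 := by rw [mul_inv_cancel₀ ha.ne', mul_one]

namespace Statement18

/-- A discrete Gronwall-type inequality: if `γ, γ', C, η > 0` and
`ρ ∈ (0,γ)` satisfy `η ≤ (1/4)·min{1-2^{-γ}, 1-2^{-γ'}, 1-2^{ρ-γ}}`, then every bounded
sequence of nonnegative reals `x_k` satisfying
`x_k ≤ C·2^{-γk} + η·Σ_{l=0}^{k-1} 2^{-γ(k-l)} x_l + η·Σ_{l=k}^∞ 2^{-γ'|k-l|} x_l`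
obeys `x_k ≤ (4C + ‖x‖_{ℓ^∞})·2^{-ρk}`. -/
theorem discrete_gronwall (γ γ' C η ρ : ℝ)
    (hγ : 0 < γ) (hγ' : 0 < γ') (hC : 0 < C) (hη : 0 < η)
    (hρ : 0 < ρ) (hργ : ρ < γ)
    (hηle : η ≤ (1 / 4) *
      min (1 - (2 : ℝ) ^ (-γ)) (min (1 - (2 : ℝ) ^ (-γ')) (1 - (2 : ℝ) ^ (ρ - γ))))
    (x : ℕ → ℝ) (hx : ∀ k, 0 ≤ x k) (hbdd : BddAbove (Set.range x))
    (hrec : ∀ k : ℕ, x k ≤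
      C * (2 : ℝ) ^ (-(γ * (k : ℝ)))
        + η * ∑ l ∈ Finset.range k, (2 : ℝ) ^ (-(γ * ((k : ℝ) - (l : ℝ)))) * x l
        + η * ∑' n : ℕ, (2 : ℝ) ^ (-(γ' * (n : ℝ))) * x (k + n)) :
    ∀ k : ℕ, x k ≤ (4 * C + ⨆ j, x j) * (2 : ℝ) ^ (-(ρ * (k : ℝ))) := by
  set M := ⨆ j, x j with hMdef
  have hxM : ∀ j, x j ≤ M := fun j => le_ciSup hbdd j
  have hM0 : 0 ≤ M := (hx 0).trans (hxM 0)
  set s := (2:ℝ) ^ (-γ) with hs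
  set r := (2:ℝ) ^ (-γ') with hr
  set u := (2:ℝ) ^ (ρ - γ) with hu
  have h2 : (1:ℝ) < 2 := one_lt_two
  have hs0 : 0 < s := Real.rpow_pos_of_pos two_pos _
  have hr0 : 0 < r := Real.rpow_pos_of_pos two_pos _
  have hu0 : 0 < u := Real.rpow_pos_of_pos two_pos _
  have hs1 : s < 1 := Real.rpow_lt_one_of_one_lt_of_neg h2 (by linarith)
  have hr1 : r < 1 := Real.rpow_lt_one_of_one_lt_of_neg h2 (by linarith)
  have hu1 : u < 1 := Real.rpow_lt_one_of_one_lt_of_neg h2 (by linarith)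
  have hmin1 : min (1 - s) (min (1 - r) (1 - u)) ≤ 1 - s := min_le_left _ _
  have hmin2 : min (1 - s) (min (1 - r) (1 - u)) ≤ 1 - r :=
    le_trans (min_le_right _ _) (min_le_left _ _)
  have hmin3 : min (1 - s) (min (1 - r) (1 - u)) ≤ 1 - u :=
    le_trans (min_le_right _ _) (min_le_right _ _)
  have hηs : η * (1 - s)⁻¹ ≤ 1/4 := eta_inv_bound (by linarith) (by linarith)
  have hηr : η * (1 - r)⁻¹ ≤ 1/4 := eta_inv_bound (by linarith) (by linarith)
  have hηu : η * (1 - u)⁻¹ ≤ 1/4 := eta_inv_bound (by linarith) (by linarith)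
  set D := 4 * C + M with hDdef
  have hD0 : 0 ≤ D := by rw [hDdef]; linarith
  clear_value M s r u D
  have key : ∀ m : ℕ, ∀ k : ℕ,
      x k ≤ D * (2:ℝ) ^ (-(ρ * (k:ℝ))) + (1/2:ℝ)^m * M := by
    intro m
    induction m with
    | zero =>
      intro k
      have hP0 : (0:ℝ) ≤ (2:ℝ) ^ (-(ρ * (k:ℝ))) := (Real.rpow_pos_of_pos two_pos _).le
      have h1 : 0 ≤ D * (2:ℝ) ^ (-(ρ * (k:ℝ))) := mul_nonneg hD0 hP0
      have h3 := hxM k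
      simp only [pow_zero, one_mul]
      linarith
    | succ m ih =>
      intro k
      set P := (2:ℝ) ^ (-(ρ * (k:ℝ))) with hP
      have hP0 : (0:ℝ) < P := by rw [hP]; exact Real.rpow_pos_of_pos two_pos _
      clear_value P
      have hε0 : (0:ℝ) ≤ (1/2:ℝ)^m := by positivity
      -- bound on the finite sum
      have hA : ∑ l ∈ Finset.range k, (2:ℝ) ^ (-(γ * ((k:ℝ) - (l:ℝ)))) * x l
          ≤ D * P * (1 - u)⁻¹ + (1/2:ℝ)^m * M * (1 - s)⁻¹ := by
        have step : ∀ l ∈ Finset.range k,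
            (2:ℝ) ^ (-(γ * ((k:ℝ) - (l:ℝ)))) * x l
              ≤ D * P * u ^ (k - l) + (1/2:ℝ)^m * M * s ^ (k - l) := by
          intro l hl
          have hlk : l < k := Finset.mem_range.mp hl
          have hcast : ((k - l : ℕ) : ℝ) = (k:ℝ) - (l:ℝ) := Nat.cast_sub hlk.le
          have e1 : (2:ℝ) ^ (-(γ * ((k:ℝ) - (l:ℝ)))) = s ^ (k - l) := by
            rw [hs, ← rpow_mul_nat' (-γ) (k - l), hcast]
            congr 1; ring
          have e2 : (2:ℝ) ^ (-(γ * ((k:ℝ) - (l:ℝ)))) * (2:ℝ) ^ (-(ρ * (l:ℝ)))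
              = P * u ^ (k - l) := by
            rw [hP, hu, ← rpow_mul_nat' (ρ - γ) (k - l), hcast,
              ← Real.rpow_add two_pos, ← Real.rpow_add two_pos]
            congr 1; ring
          have h0 : (0:ℝ) ≤ (2:ℝ) ^ (-(γ * ((k:ℝ) - (l:ℝ)))) :=
            (Real.rpow_pos_of_pos two_pos _).le
          calc (2:ℝ) ^ (-(γ * ((k:ℝ) - (l:ℝ)))) * x l
              ≤ (2:ℝ) ^ (-(γ * ((k:ℝ) - (l:ℝ)))) *
                  (D * (2:ℝ) ^ (-(ρ * (l:ℝ))) + (1/2:ℝ)^m * M) :=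
                mul_le_mul_of_nonneg_left (ih l) h0
            _ = D * ((2:ℝ) ^ (-(γ * ((k:ℝ) - (l:ℝ)))) * (2:ℝ) ^ (-(ρ * (l:ℝ))))
                  + (1/2:ℝ)^m * M * (2:ℝ) ^ (-(γ * ((k:ℝ) - (l:ℝ)))) := by ring
            _ = D * P * u ^ (k - l) + (1/2:ℝ)^m * M * s ^ (k - l) := by
                rw [e2, e1]; ring
        calc ∑ l ∈ Finset.range k, (2:ℝ) ^ (-(γ * ((k:ℝ) - (l:ℝ)))) * x l
            ≤ ∑ l ∈ Finset.range k,
                (D * P * u ^ (k - l) + (1/2:ℝ)^m * M * s ^ (k - l)) :=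
              Finset.sum_le_sum step
          _ = D * P * (∑ l ∈ Finset.range k, u ^ (k - l))
                + (1/2:ℝ)^m * M * (∑ l ∈ Finset.range k, s ^ (k - l)) := by
              rw [Finset.sum_add_distrib, ← Finset.mul_sum, ← Finset.mul_sum]
          _ ≤ D * P * (1 - u)⁻¹ + (1/2:ℝ)^m * M * (1 - s)⁻¹ :=
              add_le_add
                (mul_le_mul_of_nonneg_left (geom_refl_sum hu0.le hu1 k)
                  (mul_nonneg hD0 hP0.le))
                (mul_le_mul_of_nonneg_left (geom_refl_sum hs0.le hs1 k)
                  (mul_nonneg hε0 hM0))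
      -- bound on the tail series
      have hterm : ∀ n : ℕ, (2:ℝ) ^ (-(γ' * (n:ℝ))) * x (k + n)
          ≤ (D * P + (1/2:ℝ)^m * M) * r ^ n := by
        intro n
        have e3 : (2:ℝ) ^ (-(γ' * (n:ℝ))) = r ^ n := by
          rw [hr, ← rpow_mul_nat' (-γ') n]
          congr 1; ring
        rw [e3]
        have hexp : (2:ℝ) ^ (-(ρ * ((k + n : ℕ):ℝ))) ≤ P := by
          rw [hP]
          refine Real.rpow_le_rpow_of_exponent_le one_le_two ?_
          have h1 : (0:ℝ) ≤ ρ * (n:ℝ) := mul_nonneg hρ.le (Nat.cast_nonneg n)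
          push_cast
          nlinarith
        have h1 : x (k + n) ≤ D * P + (1/2:ℝ)^m * M := by
          have h2 := ih (k + n)
          have h3 := mul_le_mul_of_nonneg_left hexp hD0
          linarith
        calc r ^ n * x (k + n) ≤ r ^ n * (D * P + (1/2:ℝ)^m * M) :=
              mul_le_mul_of_nonneg_left h1 (pow_nonneg hr0.le n)
          _ = (D * P + (1/2:ℝ)^m * M) * r ^ n := mul_comm _ _
      have hsumR : Summable (fun n : ℕ => (D * P + (1/2:ℝ)^m * M) * r ^ n) :=
        (summable_geometric_of_lt_one hr0.le hr1).mul_left _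
      have hsumL : Summable (fun n : ℕ => (2:ℝ) ^ (-(γ' * (n:ℝ))) * x (k + n)) :=
        Summable.of_nonneg_of_le
          (fun n => mul_nonneg (Real.rpow_pos_of_pos two_pos _).le (hx _)) hterm hsumR
      have hB : ∑' n : ℕ, (2:ℝ) ^ (-(γ' * (n:ℝ))) * x (k + n)
          ≤ (D * P + (1/2:ℝ)^m * M) * (1 - r)⁻¹ := by
        calc ∑' n : ℕ, (2:ℝ) ^ (-(γ' * (n:ℝ))) * x (k + n)
            ≤ ∑' n : ℕ, (D * P + (1/2:ℝ)^m * M) * r ^ n :=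
              Summable.tsum_le_tsum hterm hsumL hsumR
          _ = (D * P + (1/2:ℝ)^m * M) * (1 - r)⁻¹ := by
              rw [tsum_mul_left, tsum_geometric_of_lt_one hr0.le hr1]
      -- the decaying first term
      have hC2 : C * (2:ℝ) ^ (-(γ * (k:ℝ))) ≤ C * P := by
        rw [hP]
        refine mul_le_mul_of_nonneg_left
          (Real.rpow_le_rpow_of_exponent_le one_le_two ?_) hC.le
        have h1 : (0:ℝ) ≤ (γ - ρ) * (k:ℝ) :=
          mul_nonneg (by linarith) (Nat.cast_nonneg k)
        nlinarith
      -- assemble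
      have hfinal : x k ≤ C * P
          + η * (D * P * (1 - u)⁻¹ + (1/2:ℝ)^m * M * (1 - s)⁻¹)
          + η * ((D * P + (1/2:ℝ)^m * M) * (1 - r)⁻¹) := by
        refine (hrec k).trans ?_
        exact add_le_add (add_le_add hC2 (mul_le_mul_of_nonneg_left hA hη.le))
          (mul_le_mul_of_nonneg_left hB hη.le)
      have hdist : η * (D * P * (1 - u)⁻¹ + (1/2:ℝ)^m * M * (1 - s)⁻¹)
          = η * (D * P * (1 - u)⁻¹) + η * ((1/2:ℝ)^m * M * (1 - s)⁻¹) := by ring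
      have b1 : η * (D * P * (1 - u)⁻¹) ≤ (1/4) * (D * P) := by
        calc η * (D * P * (1 - u)⁻¹) = (D * P) * (η * (1 - u)⁻¹) := by ring
          _ ≤ (D * P) * (1/4) := mul_le_mul_of_nonneg_left hηu (mul_nonneg hD0 hP0.le)
          _ = (1/4) * (D * P) := by ring
      have b2 : η * ((1/2:ℝ)^m * M * (1 - s)⁻¹) ≤ (1/4) * ((1/2:ℝ)^m * M) := by
        calc η * ((1/2:ℝ)^m * M * (1 - s)⁻¹) = ((1/2:ℝ)^m * M) * (η * (1 - s)⁻¹) := by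
              ring
          _ ≤ ((1/2:ℝ)^m * M) * (1/4) := mul_le_mul_of_nonneg_left hηs (mul_nonneg hε0 hM0)
          _ = (1/4) * ((1/2:ℝ)^m * M) := by ring
      have b3 : η * ((D * P + (1/2:ℝ)^m * M) * (1 - r)⁻¹)
          ≤ (1/4) * (D * P) + (1/4) * ((1/2:ℝ)^m * M) := by
        have hDP : 0 ≤ D * P + (1/2:ℝ)^m * M := by
          have h1 := mul_nonneg hD0 hP0.le
          have h2 := mul_nonneg hε0 hM0
          linarith
        calc η * ((D * P + (1/2:ℝ)^m * M) * (1 - r)⁻¹)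
            = (D * P + (1/2:ℝ)^m * M) * (η * (1 - r)⁻¹) := by ring
          _ ≤ (D * P + (1/2:ℝ)^m * M) * (1/4) := mul_le_mul_of_nonneg_left hηr hDP
          _ = (1/4) * (D * P) + (1/4) * ((1/2:ℝ)^m * M) := by ring
      have hCP : C * P ≤ (1/2) * (D * P) := by
        have h1 : C ≤ (1/2) * D := by rw [hDdef]; linarith
        calc C * P ≤ ((1/2) * D) * P := mul_le_mul_of_nonneg_right h1 hP0.le
          _ = (1/2) * (D * P) := by ring
      rw [pow_succ]
      have hhalf : (1/2:ℝ)^m * (1/2) * M = (1/2) * ((1/2:ℝ)^m * M) := by ring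
      rw [hhalf]
      linarith
  intro k
  have htend : Tendsto (fun m : ℕ => D * (2:ℝ) ^ (-(ρ * (k:ℝ))) + (1/2:ℝ)^m * M)
      atTop (𝓝 (D * (2:ℝ) ^ (-(ρ * (k:ℝ))) + 0 * M)) :=
    tendsto_const_nhds.add
      (((tendsto_pow_atTop_nhds_zero_of_lt_one (by norm_num) (by norm_num))).mul_const M)
  have hle := ge_of_tendsto' htend (fun m => key m k)
  simpa using hle

end Statement18
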